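/- For each nonnegative integer n, let ω_n(b) denote the unique solution in (2n, 2n+2) of ω = b·tan(ωπ/2) for b near 0 (b ≠ 0 small). Then as n → ∞ with b fixed, ω_n = 2n + 1 − b/(πn) + O(1/n²). -/

import Mathlib

open Real

lemma aux_arctan_sub_le (x : ℝ) : |Real.arctan x - x| ≤ |x| ^ 3 := by
  have hf : ∀ t : ℝ, HasDerivAt (fun t => Real.arctan t - t) (1 / (1 + t ^ 2) - 1) t :=
    fun t => (Real.hasDerivAt_arctan t).sub (hasDerivAt_id t)
  have hg : ∀ t : ℝ, HasDerivAt (fun t => Real.arctan t - t + t ^ 3)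
      (1 / (1 + t ^ 2) - 1 + 3 * t ^ 2) t := by
    intro t
    have h3 : HasDerivAt (fun t : ℝ => t ^ 3) (3 * t ^ 2) t := by
      simpa using hasDerivAt_pow 3 t
    exact (hf t).add h3
  have hfanti : Antitone (fun t : ℝ => Real.arctan t - t) := by
    have hm : Monotone (fun t : ℝ => -(Real.arctan t - t)) := by
      apply monotone_of_deriv_nonneg
      · exact fun t => ((hf t).neg).differentiableAt
      · intro t
        have hd : HasDerivAt (fun t : ℝ => -(Real.arctan t - t)) (-(1 / (1 + t ^ 2) - 1)) t := (hf t).neg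
        rw [hd.deriv]
        have h1 : (1 : ℝ) ≤ 1 + t ^ 2 := by nlinarith [sq_nonneg t]
        have : 1 / (1 + t ^ 2) ≤ 1 := by
          rw [div_le_one (by linarith)]; linarith
        linarith
    intro a c hac
    have := hm hac
    simp only [neg_sub] at this
    show Real.arctan c - c ≤ Real.arctan a - a
    linarith
  have hgmono : Monotone (fun t : ℝ => Real.arctan t - t + t ^ 3) := by
    apply monotone_of_deriv_nonneg
    · exact fun t => (hg t).differentiableAt
    · intro t
      rw [(hg t).deriv]
      have h2 : (0 : ℝ) < 1 + t ^ 2 := by nlinarith [sq_nonneg t]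
      have h3 : 1 / (1 + t ^ 2) - 1 = -(t ^ 2 / (1 + t ^ 2)) := by field_simp; ring
      rw [h3]
      have h4 : t ^ 2 / (1 + t ^ 2) ≤ t ^ 2 := by
        rw [div_le_iff₀ h2]; nlinarith [sq_nonneg t, sq_nonneg (t * t)]
      nlinarith [sq_nonneg t]
  rcases le_or_gt 0 x with hx | hx
  · have h1 : Real.arctan x - x ≤ 0 := by
      have := hfanti hx; simpa using this
    have h2 : -(x ^ 3) ≤ Real.arctan x - x := by
      have := hgmono hx
      simp only [Real.arctan_zero] at this
      nlinarith [this]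
    rw [abs_of_nonneg hx, abs_of_nonpos h1]
    linarith
  · have h1 : 0 ≤ Real.arctan x - x := by
      have := hfanti hx.le; simpa using this
    have h2 : Real.arctan x - x ≤ -(x ^ 3) := by
      have := hgmono hx.le
      simp only [Real.arctan_zero] at this
      nlinarith [this]
    rw [abs_of_nonpos hx.le, abs_of_nonneg h1]
    nlinarith

/-- If ω_n is the solution of ω = b tan(ωπ/2) in (2n, 2n+2) (b ≠ 0 fixed), then as
n → ∞, ω_n = 2n + 1 − b/(πn) + O(1/n²). -/
theorem stmt_16 (b : ℝ) (hb : b ≠ 0) (ω : ℕ → ℝ)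
    (hmem : ∀ n : ℕ, ω n ∈ Set.Ioo (2 * n : ℝ) (2 * n + 2))
    (heq : ∀ n : ℕ, ω n = b * Real.tan (ω n * π / 2)) :
    (fun n : ℕ => ω n - (2 * n + 1 - b / (π * n))) =O[Filter.atTop]
      (fun n : ℕ => 1 / (n : ℝ) ^ 2) := by
  have hπ : (0 : ℝ) < π := Real.pi_pos
  rw [Asymptotics.isBigO_iff]
  refine ⟨|b| ^ 3 / (4 * π) + |b| / π, ?_⟩
  filter_upwards [Filter.eventually_ge_atTop 1] with n hn
  have hn1 : (1 : ℝ) ≤ (n : ℝ) := by exact_mod_cast hn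
  have hnpos : (0 : ℝ) < n := by linarith
  set w := ω n with hwdef
  obtain ⟨hw1, hw2⟩ := hmem n
  have hwpos : 0 < w := by nlinarith
  have hw2n : 2 * (n : ℝ) ≤ w := hw1.le
  set δ := w - (2 * (n : ℝ) + 1) with hδdef
  have hδ1 : -1 < δ := by simp only [hδdef]; linarith
  have hδ2 : δ < 1 := by simp only [hδdef]; linarith
  -- rewrite the tangent via periodicity and the shift by π/2
  have htan : Real.tan (w * π / 2) = (Real.tan (-(δ * π / 2)))⁻¹ := by
    have hArg : w * π / 2 = (δ * π / 2 + π / 2) + (n : ℕ) * π := by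
      simp only [hδdef]; push_cast; ring
    rw [hArg, Real.tan_periodic.nat_mul n (δ * π / 2 + π / 2),
      show δ * π / 2 + π / 2 = π / 2 - (-(δ * π / 2)) by ring,
      Real.tan_pi_div_two_sub]
  have heqn : w = b * (Real.tan (-(δ * π / 2)))⁻¹ := by
    have h := heq n
    rw [← hwdef] at h
    rw [h, htan]
  -- the tangent value is b / w
  have ht0 : Real.tan (-(δ * π / 2)) ≠ 0 := by
    intro h
    rw [h, inv_zero, mul_zero] at heqn
    exact absurd heqn (by linarith)
  have htval : Real.tan (-(δ * π / 2)) = b / w := by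
    rw [eq_div_iff (ne_of_gt hwpos), heqn, mul_comm b, ← mul_assoc,
      mul_inv_cancel₀ ht0, one_mul]
  -- invert with arctan
  have harct : -(δ * π / 2) = Real.arctan (b / w) := by
    rw [← htval, Real.arctan_tan] <;> nlinarith
  set A := Real.arctan (b / w) with hA
  have hδeq : δ = -(2 / π) * A := by
    have : δ * π / 2 = -A := by linarith
    field_simp at this ⊢
    linarith
  -- bounds
  have hbw : |b / w| ≤ |b| / (2 * n) := by
    rw [abs_div, abs_of_pos hwpos]
    exact div_le_div_of_nonneg_left (abs_nonneg b) (by linarith) hw2n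
  have hA1 : |A - b / w| ≤ |b / w| ^ 3 := aux_arctan_sub_le (b / w)
  have hA2 : |b / w| ^ 3 ≤ (|b| / (2 * n)) ^ 3 := by
    exact pow_le_pow_left₀ (abs_nonneg _) hbw 3
  have hsec : |b / (π * n) - 2 / π * (b / w)| ≤ |b| / π * (1 / (n : ℝ) ^ 2) := by
    have hrw : b / (π * n) - 2 / π * (b / w) = b / π * ((w - 2 * n) / (n * w)) := by
      field_simp
    rw [hrw, abs_mul, abs_div, abs_of_pos hπ]
    apply mul_le_mul_of_nonneg_left _ (by positivity)
    have h1 : |(w - 2 * (n : ℝ)) / (n * w)| = (w - 2 * n) / (n * w) := by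
      rw [abs_of_nonneg (div_nonneg (by linarith) (by positivity))]
    rw [h1, div_le_iff₀ (by positivity)]
    have hd2 : (w - 2 * (n : ℝ)) ≤ 2 := by linarith
    have hnw : 2 * (n : ℝ) ^ 2 ≤ n * w := by nlinarith
    have hpos2 : (0 : ℝ) < 1 / (n : ℝ) ^ 2 := by positivity
    have hmul := mul_le_mul_of_nonneg_left hnw hpos2.le
    have hinv : 1 / (n : ℝ) ^ 2 * (2 * (n : ℝ) ^ 2) = 2 := by field_simp
    linarith
  -- combine
  have hE : w - (2 * (n : ℝ) + 1 - b / (π * n))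
      = -(2 / π) * (A - b / w) + (b / (π * n) - 2 / π * (b / w)) := by
    have : w - (2 * (n : ℝ) + 1 - b / (π * n)) = δ + b / (π * n) := by
      simp only [hδdef]; ring
    rw [this, hδeq]; ring
  have hnorm : ‖w - (2 * (n : ℝ) + 1 - b / (π * n))‖
      ≤ 2 / π * |A - b / w| + |b / (π * n) - 2 / π * (b / w)| := by
    rw [Real.norm_eq_abs, hE]
    calc |(-(2 / π) * (A - b / w)) + (b / (π * n) - 2 / π * (b / w))|
        ≤ |(-(2 / π) * (A - b / w))| + |b / (π * n) - 2 / π * (b / w)| := abs_add_le _ _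
      _ = 2 / π * |A - b / w| + |b / (π * n) - 2 / π * (b / w)| := by
          rw [abs_mul]
          congr 1
          rw [abs_neg, abs_of_pos (by positivity)]
  have hterm1 : 2 / π * |A - b / w| ≤ |b| ^ 3 / (4 * π) * (1 / (n : ℝ) ^ 2) := by
    have h1 : |A - b / w| ≤ (|b| / (2 * n)) ^ 3 := le_trans hA1 hA2
    have h2 : 2 / π * ((|b| / (2 * n)) ^ 3) ≤ |b| ^ 3 / (4 * π) * (1 / (n : ℝ) ^ 2) := by
      have he : 2 / π * ((|b| / (2 * (n : ℝ))) ^ 3) = |b| ^ 3 / (4 * π) * (1 / (n : ℝ) ^ 3) := by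
        field_simp
        ring
      have hn3 : (1 : ℝ) / (n : ℝ) ^ 3 ≤ 1 / (n : ℝ) ^ 2 :=
        one_div_le_one_div_of_le (by positivity) (by nlinarith)
      rw [he]
      exact mul_le_mul_of_nonneg_left hn3 (by positivity)
    calc 2 / π * |A - b / w| ≤ 2 / π * ((|b| / (2 * n)) ^ 3) := by
          apply mul_le_mul_of_nonneg_left h1 (by positivity)
      _ ≤ |b| ^ 3 / (4 * π) * (1 / (n : ℝ) ^ 2) := h2
  have hrhs : ‖1 / (n : ℝ) ^ 2‖ = 1 / (n : ℝ) ^ 2 := by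
    rw [Real.norm_eq_abs, abs_of_pos (by positivity)]
  rw [hrhs]
  calc ‖w - (2 * (n : ℝ) + 1 - b / (π * n))‖
      ≤ 2 / π * |A - b / w| + |b / (π * n) - 2 / π * (b / w)| := hnorm
    _ ≤ |b| ^ 3 / (4 * π) * (1 / (n : ℝ) ^ 2) + |b| / π * (1 / (n : ℝ) ^ 2) := by
        exact add_le_add hterm1 hsec
    _ = (|b| ^ 3 / (4 * π) + |b| / π) * (1 / (n : ℝ) ^ 2) := by ring
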